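/- Let Λ be a finite set with N := |Λ|, let J > 0 and h ∈ ℝ, and let ε lie in the range of ε_N. Define m_± := −h/J ± √(h²/J² − 2ε/J). Then for every function f : {−1,1}^Λ → ℝ, (1/|S_ε|) Σ_{φ∈S_ε} f(φ) = (|S_{m_+}|/(|S_{m_+}|+|S_{m_−}|)) · ⟨f⟩_MC^{m_+;N} + (|S_{m_−}|/(|S_{m_+}|+|S_{m_−}|)) · ⟨f⟩_MC^{m_−;N}, with the convention that ⟨f⟩_MC^{m;N} := 0 and |S_m| := 0 whenever m does not lie in the range of m_N. -/

import Mathlib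

/-- The magnetization `M[φ] = ∑_{x ∈ Λ} φ(x)` of a spin configuration `φ ∈ {−1,1}^Λ`,
encoded as `φ : Λ → Bool` with `true ↦ 1`, `false ↦ −1`. -/
noncomputable def mag {Λ : Type} [Fintype Λ] (φ : Λ → Bool) : ℝ :=
  ∑ x, if φ x then (1 : ℝ) else -1

/-- The Curie–Weiss Hamiltonian `H[φ] = −(J/(2N)) M[φ]² − h M[φ]`. -/
noncomputable def ham (Λ : Type) [Fintype Λ] (J h : ℝ) (φ : Λ → Bool) : ℝ :=
  -(J / (2 * (Fintype.card Λ : ℝ))) * mag φ ^ 2 - h * mag φ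

-- The set `S_m` of configurations with magnetization density `m`
-- (empty, i.e. `|S_m| = 0`, when `m` is not in the range of `m_N`).
open Classical in
noncomputable def magSet (Λ : Type) [Fintype Λ] (m : ℝ) : Finset (Λ → Bool) :=
  Finset.univ.filter fun φ => mag φ / (Fintype.card Λ : ℝ) = m

-- The set `S_ε` of configurations with energy density `ε`.
open Classical in
noncomputable def enSet (Λ : Type) [Fintype Λ] (J h ε : ℝ) : Finset (Λ → Bool) :=
  Finset.univ.filter fun φ => ham Λ J h φ / (Fintype.card Λ : ℝ) = ε

/-- Expectation `⟨f⟩_MC^{m;N}` in the fixed magnetization (auxiliary microcanonical) ensemble;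
by the division convention this is `0` when `m` is not in the range of `m_N`. -/
noncomputable def mcMagExp (Λ : Type) [Fintype Λ] (m : ℝ) (f : (Λ → Bool) → ℝ) : ℝ :=
  (∑ φ ∈ magSet Λ m, f φ) / ((magSet Λ m).card : ℝ)

/-- Expectation `⟨f⟩_MC^{ε;N}` in the fixed energy density (microcanonical) ensemble. -/
noncomputable def mcEnExp (Λ : Type) [Fintype Λ] (J h ε : ℝ) (f : (Λ → Bool) → ℝ) : ℝ :=
  (∑ φ ∈ enSet Λ J h ε, f φ) / ((enSet Λ J h ε).card : ℝ)

theorem stmt9 (Λ : Type) [Fintype Λ] (J h : ℝ) (hJ : 0 < J) (ε : ℝ)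
    (hε : ∃ φ : Λ → Bool, ham Λ J h φ / (Fintype.card Λ : ℝ) = ε)
    (mp mm : ℝ)
    (hmp : mp = -h / J + Real.sqrt (h ^ 2 / J ^ 2 - 2 * ε / J))
    (hmm : mm = -h / J - Real.sqrt (h ^ 2 / J ^ 2 - 2 * ε / J))
    (f : (Λ → Bool) → ℝ) :
    mcEnExp Λ J h ε f =
      ((magSet Λ mp).card : ℝ) / (((magSet Λ mp).card : ℝ) + ((magSet Λ mm).card : ℝ)) *
          mcMagExp Λ mp f +
        ((magSet Λ mm).card : ℝ) / (((magSet Λ mp).card : ℝ) + ((magSet Λ mm).card : ℝ)) *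
          mcMagExp Λ mm f := by
    classical
  have hJ' : J ≠ 0 := hJ.ne'
  set N : ℝ := (Fintype.card Λ : ℝ) with hNdef
  have hD : 0 ≤ h ^ 2 / J ^ 2 - 2 * ε / J := by
    obtain ⟨φ₀, hφ₀⟩ := hε
    by_cases hN : N = 0
    · rw [hN, div_zero] at hφ₀
      rw [← hφ₀]
      simp only [mul_zero, zero_div, sub_zero]
      positivity
    · rw [div_eq_iff hN] at hφ₀
      unfold ham at hφ₀
      rw [← hNdef] at hφ₀
      field_simp at hφ₀
      have h2 : (h ^ 2 - 2 * ε * J) * N ^ 2 = (h * N + J * mag φ₀) ^ 2 := by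
        linear_combination J * hφ₀
      have hrw : h ^ 2 / J ^ 2 - 2 * ε / J = ((h ^ 2 - 2 * ε * J) * N ^ 2) / (J ^ 2 * N ^ 2) := by
        field_simp
      rw [hrw, h2]
      positivity
  set s := Real.sqrt (h ^ 2 / J ^ 2 - 2 * ε / J) with hs
  have hs2 : s ^ 2 = h ^ 2 / J ^ 2 - 2 * ε / J := Real.sq_sqrt hD
  have key : enSet Λ J h ε = magSet Λ mp ∪ magSet Λ mm := by
    ext φ
    simp only [enSet, magSet, Finset.mem_filter, Finset.mem_union, Finset.mem_univ, true_and,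
      ← hNdef]
    rw [hmp, hmm]
    by_cases hN : N = 0
    · obtain ⟨φ₀, hφ₀⟩ := hε
      rw [hN, div_zero] at hφ₀
      have hε0 : ε = 0 := hφ₀.symm
      have hsabs : s = |h / J| := by
        rw [hs, hε0]
        rw [show h ^ 2 / J ^ 2 - 2 * 0 / J = (h / J) ^ 2 by ring]
        exact Real.sqrt_sq_eq_abs _
      rw [hN]
      simp only [div_zero, hε0, eq_self_iff_true, true_iff]
      rcases abs_cases (h / J) with ⟨habs, _⟩ | ⟨habs, _⟩
      · left; rw [hsabs, habs]; ring
      · right; rw [hsabs, habs]; ring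
    · unfold ham
      rw [← hNdef, div_eq_iff hN]
      set x : ℝ := mag φ with hx
      constructor
      · intro hh
        have h2 : (x / N + h / J) ^ 2 = s ^ 2 := by
          rw [hs2]
          field_simp at hh ⊢
          linear_combination (-J) * hh
        rcases sq_eq_sq_iff_eq_or_eq_neg.mp h2 with h3 | h3
        · left; linear_combination h3
        · right; linear_combination h3
      · intro hh
        have h2 : (x / N + h / J) ^ 2 = s ^ 2 := by
          rcases hh with hh | hh <;> rw [hh] <;> ring
        rw [hs2] at h2
        field_simp at h2 ⊢
        have h3 : x * (-(x * J) - N * h * 2) * J ^ 4 = N ^ 2 * 2 * ε * J ^ 4 := by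
          linear_combination (-J ^ 3) * h2
        exact mul_right_cancel₀ (pow_ne_zero 4 hJ') h3
  by_cases hpm : mp = mm
  · rw [hpm] at key ⊢
    rw [Finset.union_self] at key
    unfold mcEnExp mcMagExp
    rw [key]
    set c : ℝ := ((magSet Λ mm).card : ℝ) with hc
    set S : ℝ := ∑ φ ∈ magSet Λ mm, f φ with hS
    by_cases hc0 : c = 0
    · rw [hc0]; simp
    · field_simp
  · have hdisj : Disjoint (magSet Λ mp) (magSet Λ mm) := by
      rw [Finset.disjoint_left]
      intro φ h1 h2
      simp only [magSet, Finset.mem_filter, Finset.mem_univ, true_and] at h1 h2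
      exact hpm (h1 ▸ h2)
    unfold mcEnExp mcMagExp
    rw [key, Finset.sum_union hdisj, Finset.card_union_of_disjoint hdisj]
    push_cast
    set cp : ℝ := ((magSet Λ mp).card : ℝ) with hcp
    set cm : ℝ := ((magSet Λ mm).card : ℝ) with hcm
    set Sp : ℝ := ∑ φ ∈ magSet Λ mp, f φ with hSp
    set Sm : ℝ := ∑ φ ∈ magSet Λ mm, f φ with hSm
    have hp0 : cp = 0 → Sp = 0 := by
      intro h0
      rw [hcp] at h0
      have h1 : (magSet Λ mp).card = 0 := by exact_mod_cast h0
      rw [Finset.card_eq_zero] at h1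
      rw [hSp, h1, Finset.sum_empty]
    have hm0 : cm = 0 → Sm = 0 := by
      intro h0
      rw [hcm] at h0
      have h1 : (magSet Λ mm).card = 0 := by exact_mod_cast h0
      rw [Finset.card_eq_zero] at h1
      rw [hSm, h1, Finset.sum_empty]
    by_cases hcp0 : cp = 0
    · rw [hcp0, hp0 hcp0]
      by_cases hcm0 : cm = 0
      · rw [hcm0, hm0 hcm0]; norm_num
      · simp only [zero_add, zero_div, zero_mul]
        rw [div_self hcm0, one_mul]
    · by_cases hcm0 : cm = 0
      · rw [hcm0, hm0 hcm0]
        simp only [add_zero, zero_div, zero_mul]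
        rw [div_self hcp0, one_mul]
      · have e1 : cp / (cp + cm) * (Sp / cp) = Sp / (cp + cm) := by
          rw [div_mul_div_comm, mul_comm (cp + cm) cp, mul_div_mul_left Sp (cp + cm) hcp0]
        have e2 : cm / (cp + cm) * (Sm / cm) = Sm / (cp + cm) := by
          rw [div_mul_div_comm, mul_comm (cp + cm) cm, mul_div_mul_left Sm (cp + cm) hcm0]
        rw [e1, e2, ← add_div]
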